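/- Let G be a connected finite simple graph with a split between A and B, and let ∼ be the equivalence relation on A ∪ B generated by conditions (C1) and (C2). Then every equivalence class of ∼ is either fully contained in A or fully contained in B. -/

import Mathlib

/-- The segment of the word `τ` strictly between the two occurrences of `u`. -/
def betweenOccs {V : Type*} [DecidableEq V] (τ : List V) (u : V) : List V :=
  ((τ.dropWhile (fun x => decide (x ≠ u))).drop 1).takeWhile (fun x => decide (x ≠ u))

/-- Two symbols `u` and `v` alternate in the circular word `τ` (i.e. their four
occurrences appear in cyclic order `u, v, u, v`): exactly one of the two
occurrences of `v` lies strictly between the two occurrences of `u`. -/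
def Alternates {V : Type*} [DecidableEq V] (τ : List V) (u v : V) : Prop :=
  (betweenOccs τ u).count v = 1

/-- `τ` is a circle representation of `G`: a circular word (modelled as a list read
cyclically) in which every vertex occurs exactly twice, and two distinct vertices are
adjacent iff their occurrences alternate. -/
def IsCircleRep {V : Type*} [DecidableEq V] (G : SimpleGraph V) (τ : List V) : Prop :=
  (∀ v : V, τ.count v = 2) ∧
  ∀ u v : V, u ≠ v → (G.Adj u v ↔ Alternates τ u v)

/-- A split of `G` between `A` and `B`, with short sides `SA = 𝔰(A)` and `SB = 𝔰(B)`: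
a partition of the vertices into four parts such that every vertex of `A` is adjacent
to every vertex of `B`, there are no edges between `SA` and `B ∪ SB` nor between
`SB` and `A ∪ SA`, and both sides have at least two vertices. -/
def IsSplit {V : Type*} [DecidableEq V] (G : SimpleGraph V) (A B SA SB : Finset V) : Prop :=
  (∀ v : V, v ∈ A ∪ B ∪ SA ∪ SB) ∧
  Disjoint A B ∧ Disjoint A SA ∧ Disjoint A SB ∧
  Disjoint B SA ∧ Disjoint B SB ∧ Disjoint SA SB ∧
  (∀ a ∈ A, ∀ b ∈ B, G.Adj a b) ∧
  (∀ s ∈ SA, ∀ x ∈ B ∪ SB, ¬ G.Adj s x) ∧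
  (∀ s ∈ SB, ∀ x ∈ A ∪ SA, ¬ G.Adj s x) ∧
  2 ≤ (A ∪ SA).card ∧ 2 ≤ (B ∪ SB).card

/-- The base relation `∼` on `A ∪ B`: `x ∼ y` if `x` and `y` are distinct
non-adjacent vertices of `A ∪ B` (condition (C1)), or if `x` and `y` are connected
by a path with at least one internal vertex, all of whose internal vertices lie in
`SA ∪ SB = 𝔰(A) ∪ 𝔰(B)` (condition (C2)). -/
def SplitRel {V : Type*} [DecidableEq V] (G : SimpleGraph V) (A B SA SB : Finset V)
    (x y : V) : Prop :=
  x ∈ A ∪ B ∧ y ∈ A ∪ B ∧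
  ((x ≠ y ∧ ¬ G.Adj x y) ∨
    ∃ p : G.Walk x y, p.IsPath ∧ 2 ≤ p.length ∧
      ∀ w ∈ p.support, w ≠ x → w ≠ y → w ∈ SA ∪ SB)

/-- `Φ` is an equivalence class of the equivalence relation on `A ∪ B` generated by
the conditions (C1) and (C2). -/
def IsClass {V : Type*} [DecidableEq V] (G : SimpleGraph V) (A B SA SB : Finset V)
    (Φ : Set V) : Prop :=
  ∃ x, x ∈ A ∪ B ∧
    Φ = {y | y ∈ A ∪ B ∧ Relation.EqvGen (SplitRel G A B SA SB) x y}


lemma split_no_walk {V : Type*} [DecidableEq V] (G : SimpleGraph V) (A B SA SB : Finset V)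
    (hsplit : IsSplit G A B SA SB) :
    ∀ {w y : V} (q : G.Walk w y), y ∈ B → w ∈ SA →
      (∀ v ∈ q.support, v ≠ y → v ∈ SA ∪ SB) → False := by
  intro w y q
  induction q with
  | nil =>
    intro hy hw _
    exact Finset.disjoint_left.mp hsplit.2.2.2.2.1 hy hw
  | @cons a b c h q ih =>
    intro hy hw hsup
    by_cases hby : b = c
    · subst hby
      exact hsplit.2.2.2.2.2.2.2.2.1 a hw b (Finset.mem_union_left _ hy) h
    · have hb : b ∈ SA ∪ SB := hsup b (by simp) hby
      rcases Finset.mem_union.mp hb with hbA | hbB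
      · exact ih hy hbA (fun v hv hvy => hsup v (by simp [hv]) hvy)
      · exact hsplit.2.2.2.2.2.2.2.2.1 a hw b (Finset.mem_union_right _ hbB) h

lemma splitRel_not_A_B {V : Type*} [DecidableEq V] (G : SimpleGraph V) (A B SA SB : Finset V)
    (hsplit : IsSplit G A B SA SB) {x y : V} (hx : x ∈ A) (hy : y ∈ B)
    (h : SplitRel G A B SA SB x y) : False := by
  rcases h with ⟨_, _, h | ⟨p, hp, hlen, hsup⟩⟩
  · exact h.2 (hsplit.2.2.2.2.2.2.2.1 x hx y hy)
  · cases p with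
    | nil => simp at hlen
    | @cons _ b _ h q =>
      have hxq : x ∉ q.support := (SimpleGraph.Walk.cons_isPath_iff _ _).mp hp |>.2
      have hbx : b ≠ x := fun e => hxq (e ▸ q.start_mem_support)
      have hby : b ≠ y := by
        intro e
        subst e
        have : q = SimpleGraph.Walk.nil :=
          SimpleGraph.Walk.isPath_iff_eq_nil.mp hp.of_cons
        simp [this] at hlen
      have hb : b ∈ SA ∪ SB := hsup b (by simp) hbx hby
      rcases Finset.mem_union.mp hb with hbA | hbB
      · refine split_no_walk G A B SA SB hsplit q hy hbA (fun v hv hvy => ?_)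
        have hvx : v ≠ x := fun e => hxq (e ▸ hv)
        exact hsup v (by simp [hv]) hvx hvy
      · exact hsplit.2.2.2.2.2.2.2.2.2.1 b hbB x (Finset.mem_union_left _ hx) h.symm

lemma splitRel_symm {V : Type*} [DecidableEq V] (G : SimpleGraph V) (A B SA SB : Finset V)
    {x y : V} (h : SplitRel G A B SA SB x y) : SplitRel G A B SA SB y x := by
  obtain ⟨hx, hy, h | ⟨p, hp, hlen, hsup⟩⟩ := h
  · exact ⟨hy, hx, Or.inl ⟨h.1.symm, fun hadj => h.2 hadj.symm⟩⟩
  · refine ⟨hy, hx, Or.inr ⟨p.reverse, hp.reverse, by simpa using hlen, fun w hw h1 h2 => ?_⟩⟩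
    exact hsup w (by simpa using hw) h2 h1

lemma splitRel_iff_A {V : Type*} [DecidableEq V] (G : SimpleGraph V) (A B SA SB : Finset V)
    (hsplit : IsSplit G A B SA SB) {x y : V} (h : SplitRel G A B SA SB x y) :
    x ∈ A ↔ y ∈ A := by
  constructor
  · intro hx
    rcases Finset.mem_union.mp h.2.1 with hyA | hyB
    · exact hyA
    · exact absurd (splitRel_not_A_B G A B SA SB hsplit hx hyB h) not_false
  · intro hy
    rcases Finset.mem_union.mp h.1 with hxA | hxB
    · exact hxA
    · exact absurd (splitRel_not_A_B G A B SA SB hsplit hy hxB (splitRel_symm G A B SA SB h))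
        not_false

/-- Every equivalence class of the equivalence relation `∼` on `A ∪ B` generated by
(C1) and (C2) is either fully contained in `A` or fully contained in `B`. -/
theorem classes_contained_in_A_or_B
    {V : Type*} [DecidableEq V] [Fintype V]
    (G : SimpleGraph V) (hconn : G.Connected)
    (A B SA SB : Finset V) (hsplit : IsSplit G A B SA SB) :
    ∀ x y : V, x ∈ A ∪ B → y ∈ A ∪ B →
      Relation.EqvGen (SplitRel G A B SA SB) x y → (x ∈ A ↔ y ∈ A) := by
  intro x y hx hy h
  clear hx hy
  induction h with
  | rel a b hab => exact splitRel_iff_A G A B SA SB hsplit hab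
  | refl a => exact Iff.rfl
  | symm a b _ ih => exact ih.symm
  | trans a b c _ _ ih1 ih2 => exact ih1.trans ih2
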